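/- Let μ ∈ ℝ^d, σ > 0, p > 1. Let ρ = Stud_p(μ, σ I_d) be the multivariate p-Student distribution on ℝ^d, i.e., the law of μ + σ Z sqrt(p/U) with Z ∼ N(0, I_d), U ∼ χ²_p independent, and let η = N(μ, σ I_d) be the Gaussian law of μ + σ Z. Then the 1-Wasserstein distance (for the Euclidean metric on ℝ^d) satisfies W_1(ρ, η) ≤ σ √d · E_{U∼χ²_p}[ | sqrt(p/U) − 1 | ]. -/

import Mathlib

open MeasureTheory ProbabilityTheory
open Real Filter
open scoped NNReal ENNReal

/-- The chi-squared distribution with `p` (real) degrees of freedom, via its density. -/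
noncomputable def chiSq (p : ℝ) : Measure ℝ :=
  volume.withDensity fun u =>
    ENNReal.ofReal
      (if 0 < u then u ^ (p / 2 - 1) * Real.exp (-u / 2) / (2 ^ (p / 2) * Real.Gamma (p / 2))
       else 0)

/-- Standard Gaussian `N(0, I_d)` on `Fin d → ℝ`. -/
noncomputable def stdGaussPi (d : ℕ) : Measure (Fin d → ℝ) :=
  Measure.pi fun _ : Fin d => gaussianReal 0 1

/-- The multivariate `p`-Student distribution `Stud_p(μ, σ I_d)`:
the law of `μ + σ·Z·√(p/U)` with `Z ∼ N(0, I_d)` and `U ∼ χ²_p` independent. -/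
noncomputable def studentLaw (d : ℕ) (p σ : ℝ) (μ : Fin d → ℝ) : Measure (Fin d → ℝ) :=
  ((stdGaussPi d).prod (chiSq p)).map
    fun zu => fun i => μ i + σ * zu.1 i * Real.sqrt (p / zu.2)

/-- The Gaussian law of `μ + σ·Z` with `Z ∼ N(0, I_d)`, i.e. `N(μ, σ I_d)`. -/
noncomputable def gaussLaw (d : ℕ) (σ : ℝ) (μ : Fin d → ℝ) : Measure (Fin d → ℝ) :=
  (stdGaussPi d).map fun z => fun i => μ i + σ * z i

lemma chiSq_eq_gamma {p : ℝ} (hp : 0 < p) : chiSq p = gammaMeasure (p / 2) (1 / 2) := by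
  rw [chiSq, gammaMeasure]
  apply withDensity_congr_ae
  have h0 : (volume : Measure ℝ) {(0:ℝ)} = 0 := measure_singleton 0
  rw [Filter.EventuallyEq, ae_iff]
  refine measure_mono_null (fun u hu => ?_) h0
  simp only [Set.mem_setOf_eq] at hu
  by_contra h
  apply hu
  have hu0 : u ≠ 0 := h
  rcases lt_or_gt_of_ne hu0 with h1 | h1
  · rw [if_neg (by linarith), gammaPDF, gammaPDFReal, if_neg (by linarith)]
  · rw [if_pos h1, gammaPDF, gammaPDFReal, if_pos h1.le]
    have h2 : ((1:ℝ)/2) ^ (p/2) = ((2:ℝ) ^ (p/2))⁻¹ := by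
      rw [one_div, Real.inv_rpow (by norm_num : (0:ℝ) ≤ 2)]
    have h3 : -((1:ℝ)/2 * u) = -u/2 := by ring
    rw [h2, h3]
    field_simp

lemma chiSq_prob {p : ℝ} (hp : 1 < p) : IsProbabilityMeasure (chiSq p) := by
  rw [chiSq_eq_gamma (by linarith)]
  exact isProbabilityMeasure_gammaMeasure (by linarith) (by norm_num)


lemma sq_exp_deriv (x : ℝ) :
    HasDerivAt (fun x : ℝ => -x * Real.exp (-(1/2) * x ^ 2))
      ((x ^ 2 - 1) * Real.exp (-(1/2) * x ^ 2)) x := by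
  have h1 : HasDerivAt (fun x : ℝ => -(1/2) * x ^ 2) (-(1/2) * (2 * x)) x := by
    simpa using ((hasDerivAt_pow 2 x).const_mul (-(1/2):ℝ))
  have h2 := h1.exp
  have h3 : HasDerivAt (fun x : ℝ => -x * Real.exp (-(1/2) * x ^ 2)) _ x := (hasDerivAt_neg x).mul h2
  convert h3 using 1
  ring

lemma integrable_sq_exp : Integrable (fun x : ℝ => x ^ 2 * Real.exp (-(1/2) * x ^ 2)) := by
  have := integrable_rpow_mul_exp_neg_mul_sq (by norm_num : (0:ℝ) < 1/2) (by norm_num : (-1:ℝ) < 2)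
  convert this using 2 with x
  rw [← Real.rpow_natCast x 2]
  norm_num

lemma integrable_exp_half : Integrable (fun x : ℝ => Real.exp (-(1/2) * x ^ 2)) :=
  integrable_exp_neg_mul_sq (by norm_num)

lemma tendsto_x_exp : Tendsto (fun x : ℝ => x * Real.exp (-(1/2) * x ^ 2)) atTop (nhds 0) := by
  have h := rpow_mul_exp_neg_mul_sq_isLittleO_exp_neg (by norm_num : (0:ℝ) < 1/2) 1
  have h2 : Tendsto (fun x : ℝ => Real.exp (-(1/2) * x)) atTop (nhds 0) := by
    have hmul : Tendsto (fun x : ℝ => (1/2 : ℝ) * x) atTop atTop :=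
      (tendsto_const_mul_atTop_of_pos (by norm_num)).2 tendsto_id
    have hlin : Tendsto (fun x : ℝ => -(1/2) * x) atTop atBot :=
      (tendsto_neg_atTop_atBot.comp hmul).congr fun x => by simp [Function.comp]
    exact Real.tendsto_exp_atBot.comp hlin
  have h3 := h.trans_tendsto h2
  refine h3.congr' ?_
  filter_upwards with x
  rw [Real.rpow_one]

lemma key_int : (∫ x : ℝ, (x ^ 2 - 1) * Real.exp (-(1/2) * x ^ 2)) = 0 := by
  have hint : Integrable (fun x : ℝ => (x ^ 2 - 1) * Real.exp (-(1/2) * x ^ 2)) := by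
    have := integrable_sq_exp.sub integrable_exp_half
    refine this.congr (Filter.Eventually.of_forall fun x => ?_)
    simp only [Pi.sub_apply]
    ring
  have htop : Tendsto (fun x : ℝ => -x * Real.exp (-(1/2) * x ^ 2)) atTop (nhds 0) := by
    have := tendsto_x_exp.neg
    simp only [neg_zero] at this
    refine this.congr fun x => by ring
  have hbot : Tendsto (fun x : ℝ => -x * Real.exp (-(1/2) * x ^ 2)) atBot (nhds 0) := by
    have := tendsto_x_exp.comp tendsto_neg_atBot_atTop
    refine this.congr fun x => ?_
    simp only [Function.comp]
    ring_nf
  have := MeasureTheory.integral_of_hasDerivAt_of_tendsto (fun x => sq_exp_deriv x) hint hbot htop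
  simpa using this

lemma int_sq_exp : (∫ x : ℝ, x ^ 2 * Real.exp (-(1/2) * x ^ 2)) = Real.sqrt (2 * Real.pi) := by
  have hsub := integral_sub integrable_sq_exp integrable_exp_half
  have h1 : (∫ x : ℝ, (x ^ 2 - 1) * Real.exp (-(1/2) * x ^ 2))
      = (∫ x : ℝ, x ^ 2 * Real.exp (-(1/2) * x ^ 2)) - ∫ x : ℝ, Real.exp (-(1/2) * x ^ 2) := by
    rw [← hsub]; congr 1 with x; ring
  have h2 := key_int
  rw [h1] at h2
  have h3 : (∫ x : ℝ, Real.exp (-(1/2) * x ^ 2)) = Real.sqrt (2 * Real.pi) := by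
    rw [integral_gaussian]
    congr 1
    rw [div_div_eq_mul_div, div_one]  -- π / (1/2) = 2π?
    ring
  linarith [h2, h3.symm]

lemma gaussPDF_eq (x : ℝ) :
    gaussianPDFReal 0 1 x = (Real.sqrt (2 * Real.pi))⁻¹ * Real.exp (-(1/2) * x ^ 2) := by
  rw [gaussianPDFReal]
  norm_num [NNReal.coe_one]
  left
  ring_nf

lemma integrable_sq_gauss : Integrable (fun x : ℝ => x ^ 2) (gaussianReal 0 1) := by
  rw [gaussianReal_of_var_ne_zero 0 one_ne_zero]
  have hmeq : (gaussianPDF 0 1) = fun x => ((Real.toNNReal (gaussianPDFReal 0 1 x) : ℝ≥0) : ℝ≥0∞) := by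
    funext x; rfl
  rw [hmeq, integrable_withDensity_iff_integrable_smul]
  · have : Integrable (fun x : ℝ => (Real.sqrt (2 * Real.pi))⁻¹ * (x ^ 2 * Real.exp (-(1/2) * x ^ 2))) :=
      integrable_sq_exp.const_mul _
    refine this.congr (Filter.Eventually.of_forall fun x => ?_)
    simp only [NNReal.smul_def, smul_eq_mul, Real.coe_toNNReal _ (gaussianPDFReal_nonneg 0 1 x)]
    rw [gaussPDF_eq]
    ring
  · exact (measurable_gaussianPDFReal 0 1).real_toNNReal

lemma int_sq_gauss : (∫ x : ℝ, x ^ 2 ∂(gaussianReal 0 1)) = 1 := by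
  rw [gaussianReal_of_var_ne_zero 0 one_ne_zero]
  have hmeq : (gaussianPDF 0 1) = fun x => ((Real.toNNReal (gaussianPDFReal 0 1 x) : ℝ≥0) : ℝ≥0∞) := by
    funext x; rfl
  rw [hmeq, integral_withDensity_eq_integral_smul ((measurable_gaussianPDFReal 0 1).real_toNNReal)]
  have : (∫ x : ℝ, Real.toNNReal (gaussianPDFReal 0 1 x) • x ^ 2)
      = ∫ x : ℝ, (Real.sqrt (2 * Real.pi))⁻¹ * (x ^ 2 * Real.exp (-(1/2) * x ^ 2)) := by
    congr 1 with x
    simp only [NNReal.smul_def, smul_eq_mul, Real.coe_toNNReal _ (gaussianPDFReal_nonneg 0 1 x)]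
    rw [gaussPDF_eq]
    ring
  rw [this, integral_const_mul, int_sq_exp, inv_mul_cancel₀]
  positivity


instance stdGaussPi_prob (d : ℕ) : IsProbabilityMeasure (stdGaussPi d) := by
  unfold stdGaussPi; infer_instance


lemma stdGaussPi_map_eval (d : ℕ) (i : Fin d) :
    (stdGaussPi d).map (Function.eval i) = gaussianReal 0 1 := by
  apply Measure.ext fun s hs => ?_
  rw [Measure.map_apply (measurable_pi_apply i) hs, Set.eval_preimage, stdGaussPi, Measure.pi_pi]
  rw [Finset.prod_eq_single i]
  · simp
  · intro j _ hj
    simp [Function.update_of_ne hj]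
  · simp

lemma integrable_eval_sq (d : ℕ) (i : Fin d) :
    Integrable (fun z : Fin d → ℝ => z i ^ 2) (stdGaussPi d) := by
  have h := integrable_sq_gauss
  rw [← stdGaussPi_map_eval d i] at h
  exact (integrable_map_measure ((continuous_pow 2).aestronglyMeasurable) (measurable_pi_apply i).aemeasurable).mp h

lemma int_eval_sq (d : ℕ) (i : Fin d) :
    (∫ z : Fin d → ℝ, z i ^ 2 ∂(stdGaussPi d)) = 1 := by
  rw [← int_sq_gauss, ← stdGaussPi_map_eval d i,
    integral_map (measurable_pi_apply i).aemeasurable (by fun_prop)]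

lemma int_sum_sq (d : ℕ) :
    (∫ z : Fin d → ℝ, (∑ i, z i ^ 2) ∂(stdGaussPi d)) = d := by
  rw [integral_finset_sum _ fun i _ => integrable_eval_sq d i]
  simp [int_eval_sq]

lemma sqrt_le_half_add (x : ℝ) (hx : 0 ≤ x) : Real.sqrt x ≤ (1 + x) / 2 := by
  nlinarith [Real.sq_sqrt hx, Real.sqrt_nonneg x, sq_nonneg (Real.sqrt x - 1)]

lemma integrable_norm_gauss (d : ℕ) :
    Integrable (fun z : Fin d → ℝ => Real.sqrt (∑ i, z i ^ 2)) (stdGaussPi d) := by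
  have hbound : Integrable (fun z : Fin d → ℝ => (1 + ∑ i, z i ^ 2) / 2) (stdGaussPi d) := by
    apply Integrable.div_const
    exact (integrable_const 1).add (integrable_finset_sum _ fun i _ => integrable_eval_sq d i)
  refine hbound.mono' ?_ ?_
  · apply Measurable.aestronglyMeasurable
    fun_prop
  · filter_upwards with z
    rw [Real.norm_eq_abs, abs_of_nonneg (Real.sqrt_nonneg _)]
    exact sqrt_le_half_add _ (by positivity)

lemma int_norm_gauss_le (d : ℕ) :
    (∫ z : Fin d → ℝ, Real.sqrt (∑ i, z i ^ 2) ∂(stdGaussPi d)) ≤ Real.sqrt d := by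
  set I := ∫ z : Fin d → ℝ, Real.sqrt (∑ i, z i ^ 2) ∂(stdGaussPi d) with hI
  have hInt := integrable_norm_gauss d
  have hIntSq : Integrable (fun z : Fin d → ℝ => (∑ i, z i ^ 2)) (stdGaussPi d) :=
    integrable_finset_sum _ fun i _ => integrable_eval_sq d i
  have hInonneg : 0 ≤ I := integral_nonneg fun z => Real.sqrt_nonneg _
  have hexp : (∫ z : Fin d → ℝ, (Real.sqrt (∑ i, z i ^ 2) - I) ^ 2 ∂(stdGaussPi d))
      = (d : ℝ) - I ^ 2 := by
    have h1 : (fun z : Fin d → ℝ => (Real.sqrt (∑ i, z i ^ 2) - I) ^ 2)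
        = fun z => ((∑ i, z i ^ 2) - (2 * I) * Real.sqrt (∑ i, z i ^ 2)) + I ^ 2 := by
      funext z
      have := Real.sq_sqrt (show 0 ≤ ∑ i, z i ^ 2 by positivity)
      nlinarith [this]
    have hf : Integrable (fun z : Fin d → ℝ => (∑ i, z i ^ 2) - (2 * I) * Real.sqrt (∑ i, z i ^ 2)) (stdGaussPi d) := hIntSq.sub (hInt.const_mul (2 * I))
    have hg : Integrable (fun z : Fin d → ℝ => (2 * I) * Real.sqrt (∑ i, z i ^ 2)) (stdGaussPi d) := hInt.const_mul (2 * I)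
    rw [h1, integral_add hf (integrable_const _),
      integral_sub hIntSq hg, integral_const_mul, int_sum_sq]
    simp only [integral_const, measure_univ, probReal_univ, ENNReal.toReal_one, smul_eq_mul, one_mul, ← hI]
    ring
  have hnonneg : 0 ≤ (d : ℝ) - I ^ 2 := by
    rw [← hexp]
    exact integral_nonneg fun z => sq_nonneg _
  have : I ^ 2 ≤ (d : ℝ) := by linarith
  calc I = Real.sqrt (I ^ 2) := by rw [Real.sqrt_sq hInonneg]
  _ ≤ Real.sqrt d := Real.sqrt_le_sqrt this


theorem stmt19 (d : ℕ) (μ : Fin d → ℝ) (σ p : ℝ) (hσ : 0 < σ) (hp : 1 < p) :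
    (⨅ γ : {γ : Measure ((Fin d → ℝ) × (Fin d → ℝ)) //
        IsProbabilityMeasure γ ∧
        γ.map Prod.fst = studentLaw d p σ μ ∧
        γ.map Prod.snd = gaussLaw d σ μ},
      ∫ q : (Fin d → ℝ) × (Fin d → ℝ), Real.sqrt (∑ i, (q.1 i - q.2 i) ^ 2) ∂(γ.1 : Measure ((Fin d → ℝ) × (Fin d → ℝ)))) ≤
      σ * Real.sqrt d * ∫ u, |Real.sqrt (p / u) - 1| ∂(chiSq p) := by
  have hχ : IsProbabilityMeasure (chiSq p) := chiSq_prob hp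
  -- the coupling map
  set T : (Fin d → ℝ) × ℝ → (Fin d → ℝ) × (Fin d → ℝ) :=
    fun zu => (fun i => μ i + σ * zu.1 i * Real.sqrt (p / zu.2),
               fun i => μ i + σ * zu.1 i) with hT
  have hsqrtm : Measurable fun u : ℝ => Real.sqrt (p / u) :=
    Real.continuous_sqrt.measurable.comp (measurable_const.div measurable_id)
  have hT1 : Measurable fun zu : (Fin d → ℝ) × ℝ =>
      (fun i => μ i + σ * zu.1 i * Real.sqrt (p / zu.2)) := by
    apply measurable_pi_lambda
    intro i
    exact measurable_const.add
      (by fun_prop)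
  have hT2' : Measurable fun z : Fin d → ℝ => (fun i => μ i + σ * z i) := by
    apply measurable_pi_lambda
    intro i
    exact measurable_const.add (by fun_prop)
  have hTm : Measurable T := (hT1.prodMk (hT2'.comp measurable_fst))
  set π₀ := (stdGaussPi d).prod (chiSq p) with hπ₀
  set γ : Measure ((Fin d → ℝ) × (Fin d → ℝ)) := π₀.map T with hγ
  have hγprob : IsProbabilityMeasure γ := Measure.isProbabilityMeasure_map hTm.aemeasurable
  have hfst : γ.map Prod.fst = studentLaw d p σ μ := by
    rw [hγ, Measure.map_map measurable_fst hTm]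
    rfl
  have hsnd : γ.map Prod.snd = gaussLaw d σ μ := by
    rw [hγ, Measure.map_map measurable_snd hTm]
    have : (Prod.snd ∘ T) = (fun z : Fin d → ℝ => fun i => μ i + σ * z i) ∘ Prod.fst := rfl
    rw [this, ← Measure.map_map hT2' measurable_fst, hπ₀, Measure.map_fst_prod]
    simp [gaussLaw]
  -- compute integral over the coupling
  have hcont : Continuous fun q : (Fin d → ℝ) × (Fin d → ℝ) =>
      Real.sqrt (∑ i, (q.1 i - q.2 i) ^ 2) := by
    apply Real.continuous_sqrt.comp
    apply continuous_finset_sum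
    intro i _
    exact ((continuous_apply i).comp continuous_fst |>.sub
      ((continuous_apply i).comp continuous_snd)).pow 2
  have hpt : ∀ (z : Fin d → ℝ) (u : ℝ),
      Real.sqrt (∑ i, ((μ i + σ * z i * Real.sqrt (p/u)) - (μ i + σ * z i))^2)
        = Real.sqrt (∑ i, z i ^ 2) * (σ * |Real.sqrt (p/u) - 1|) := by
    intro z u
    set s := Real.sqrt (p/u) with hs
    have h1 : (∑ i, ((μ i + σ * z i * s) - (μ i + σ * z i))^2)
        = (σ*(s-1))^2 * ∑ i, z i ^ 2 := by
      rw [Finset.mul_sum]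
      exact Finset.sum_congr rfl fun i _ => by ring
    rw [h1, Real.sqrt_mul (sq_nonneg _), Real.sqrt_sq_eq_abs, abs_mul, abs_of_pos hσ]
    ring
  have hmap : (∫ q : (Fin d → ℝ) × (Fin d → ℝ), Real.sqrt (∑ i, (q.1 i - q.2 i) ^ 2) ∂γ)
      = ∫ zu : (Fin d → ℝ) × ℝ,
          Real.sqrt (∑ i, zu.1 i ^ 2) * (σ * |Real.sqrt (p/zu.2) - 1|) ∂π₀ := by
    rw [hγ, integral_map hTm.aemeasurable hcont.aestronglyMeasurable]
    exact integral_congr_ae (Filter.Eventually.of_forall fun zu => hpt zu.1 zu.2)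
  have hfub : (∫ zu : (Fin d → ℝ) × ℝ,
        Real.sqrt (∑ i, zu.1 i ^ 2) * (σ * |Real.sqrt (p/zu.2) - 1|) ∂π₀)
      = (∫ z : Fin d → ℝ, Real.sqrt (∑ i, z i ^ 2) ∂(stdGaussPi d))
        * ∫ u, σ * |Real.sqrt (p/u) - 1| ∂(chiSq p) := by
    rw [hπ₀]
    exact integral_prod_mul (fun z : Fin d → ℝ => Real.sqrt (∑ i, z i ^ 2))
      (fun u => σ * |Real.sqrt (p/u) - 1|)
  have hE : (∫ u, σ * |Real.sqrt (p/u) - 1| ∂(chiSq p))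
      = σ * ∫ u, |Real.sqrt (p/u) - 1| ∂(chiSq p) := integral_const_mul σ _
  have hEnn : 0 ≤ ∫ u, |Real.sqrt (p/u) - 1| ∂(chiSq p) :=
    integral_nonneg fun u => abs_nonneg _
  have hNnn : 0 ≤ ∫ z : Fin d → ℝ, Real.sqrt (∑ i, z i ^ 2) ∂(stdGaussPi d) :=
    integral_nonneg fun z => Real.sqrt_nonneg _
  have hval : (∫ q : (Fin d → ℝ) × (Fin d → ℝ), Real.sqrt (∑ i, (q.1 i - q.2 i) ^ 2) ∂γ)
      ≤ σ * Real.sqrt d * ∫ u, |Real.sqrt (p/u) - 1| ∂(chiSq p) := by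
    rw [hmap, hfub, hE]
    have h1 := int_norm_gauss_le d
    nlinarith [mul_le_mul_of_nonneg_right h1 (mul_nonneg hσ.le hEnn)]
  refine ciInf_le_of_le ?_ ⟨γ, hγprob, hfst, hsnd⟩ hval
  refine ⟨0, ?_⟩
  rintro x ⟨γ', rfl⟩
  exact integral_nonneg fun q => Real.sqrt_nonneg _
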